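/- (High-SNR sum-capacity expression; mathematical content of Corollaries 2 and 4) Let K ≥ 1 and let H₁,…,H_K be proper real matrices, where H_k has size M×N_k (all with M rows). For P > 0 let C(H_k, P) be the supremum of (1/2) · log det(I_M + H_k * Q * H_kᵀ) over all N_k×N_k real positive-semidefinite matrices Q with trace Q ≤ P. Then for every ε > 0 there exists P₀ > 0 such that for all P₁,…,P_K with min_k P_k ≥ P₀, | min_{k=1,…,K} C(H_k, P_k) − (M/2) · log( (min_{k=1,…,K} P_k) / M ) | ≤ ε. -/

import Mathlib

open Matrix

/-- The Gaussian MIMO capacity `C(H, P)`: the supremum of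
`(1/2) · log det (I + H * Q * Hᵀ)` over all positive-semidefinite input
covariance matrices `Q` with `trace Q ≤ P`. -/
noncomputable def mimoCapacity (M N : ℕ) (H : Matrix (Fin M) (Fin N) ℝ) (P : ℝ) : ℝ :=
  sSup {r : ℝ | ∃ Q : Matrix (Fin N) (Fin N) ℝ, Q.PosSemidef ∧ Q.trace ≤ P ∧
    r = (1 / 2 : ℝ) * Real.log ((1 + H * Q * Hᵀ).det)}

/- ### Auxiliary lemmas -/

section Aux

/-- Trace of a real PSD matrix is nonnegative. -/
lemma aux_trace_nonneg {n : ℕ} {A : Matrix (Fin n) (Fin n) ℝ} (hA : A.PosSemidef) :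
    0 ≤ A.trace := by
  rw [Matrix.trace]
  refine Finset.sum_nonneg fun i _ => ?_
  have := hA.dotProduct_mulVec_nonneg (Pi.single i 1)
  simpa [single_dotProduct, Matrix.mulVec_single] using this

/-- A nonnegative multiple of a PSD matrix is PSD. -/
lemma aux_smul_posSemidef {n : ℕ} {A : Matrix (Fin n) (Fin n) ℝ} (hA : A.PosSemidef)
    {c : ℝ} (hc : 0 ≤ c) : (c • A).PosSemidef := by
  constructor
  · unfold Matrix.IsHermitian
    rw [conjTranspose_smul, hA.1.eq]
    simp
  · exact (hA.smul hc).2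

/-- A PSD matrix with nonzero determinant is positive definite. -/
lemma aux_posDef_of_det_ne_zero {n : ℕ} {A : Matrix (Fin n) (Fin n) ℝ}
    (hA : A.PosSemidef) (hd : A.det ≠ 0) : A.PosDef := by
  refine PosDef.of_dotProduct_mulVec_pos hA.1 fun x hx => ?_
  rcases lt_or_eq_of_le (hA.dotProduct_mulVec_nonneg x) with h | h
  · exact h
  · exact absurd (Matrix.eq_zero_of_mulVec_eq_zero hd
      ((hA.dotProduct_mulVec_zero_iff x).mp h.symm)) hx

/-- The trace of a product of two PSD matrices is nonnegative. -/
lemma aux_trace_mul_nonneg {n : ℕ} {A B : Matrix (Fin n) (Fin n) ℝ}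
    (hA : A.PosSemidef) (hB : B.PosSemidef) : 0 ≤ (A * B).trace := by
  obtain ⟨C, rfl⟩ : ∃ C : Matrix (Fin n) (Fin n) ℝ, B = Cᴴ * C := by
    open scoped MatrixOrder in
    exact ⟨CFC.sqrt B, by rw [(CFC.sqrt_nonneg B).posSemidef.1.eq, CFC.sqrt_mul_sqrt_self B hB.nonneg]⟩
  rw [← mul_assoc, trace_mul_comm, ← mul_assoc]
  exact aux_trace_nonneg (hA.mul_mul_conjTranspose_same C)

/-- Trace of a Hermitian matrix equals sum of eigenvalues. -/
lemma aux_trace_eq_sum_eigenvalues {m : ℕ} {A : Matrix (Fin m) (Fin m) ℝ}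
    (hA : A.IsHermitian) : A.trace = ∑ i, hA.eigenvalues i := by
  nth_rewrite 1 [hA.spectral_theorem]
  rw [Unitary.conjStarAlgAut_apply]
  rw [Matrix.trace_mul_cycle]
  rw [(Matrix.mem_unitaryGroup_iff').mp (hA.eigenvectorUnitary).2]
  simp [Matrix.trace_diagonal]

/-- Determinant of `1 + A` for Hermitian `A`. -/
lemma aux_det_one_add {m : ℕ} {A : Matrix (Fin m) (Fin m) ℝ} (hA : A.IsHermitian) :
    (1 + A).det = ∏ i, (1 + hA.eigenvalues i) := by
  have h1 : (1 : Matrix (Fin m) (Fin m) ℝ) + A =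
      (hA.eigenvectorUnitary : Matrix (Fin m) (Fin m) ℝ) *
        diagonal (fun i => 1 + hA.eigenvalues i) *
        (star (hA.eigenvectorUnitary : Matrix (Fin m) (Fin m) ℝ)) := by
    have : (diagonal (fun i => (1:ℝ) + hA.eigenvalues i)) =
        1 + diagonal (RCLike.ofReal ∘ hA.eigenvalues) := by
      rw [← diagonal_one, diagonal_add]; rfl
    rw [this, mul_add, add_mul, mul_one,
      (Matrix.mem_unitaryGroup_iff).mp (hA.eigenvectorUnitary).2]
    nth_rewrite 1 [hA.spectral_theorem]
    rw [Unitary.conjStarAlgAut_apply]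
  rw [h1, det_mul, det_mul, mul_comm, ← mul_assoc, ← det_mul,
    (Matrix.mem_unitaryGroup_iff').mp (hA.eigenvectorUnitary).2]
  simp [det_diagonal]

/-- For PSD `A`, `det A ≤ det (1 + A)`. -/
lemma aux_det_le_det_one_add {m : ℕ} {A : Matrix (Fin m) (Fin m) ℝ} (hA : A.PosSemidef) :
    A.det ≤ (1 + A).det := by
  have hdet' : A.det = ∏ i, hA.1.eigenvalues i := by
    rw [hA.1.det_eq_prod_eigenvalues]; norm_num
  rw [aux_det_one_add hA.1, hdet']
  exact Finset.prod_le_prod (fun i _ => hA.eigenvalues_nonneg i)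
    (fun i _ => by linarith [hA.eigenvalues_nonneg i])

/-- For PSD `A`, `1 ≤ det (1 + A)`. -/
lemma aux_one_le_det_one_add {m : ℕ} {A : Matrix (Fin m) (Fin m) ℝ} (hA : A.PosSemidef) :
    1 ≤ (1 + A).det := by
  rw [aux_det_one_add hA.1]
  calc (1:ℝ) = ∏ _i : Fin m, (1:ℝ) := by simp
    _ ≤ ∏ i, (1 + hA.1.eigenvalues i) :=
        Finset.prod_le_prod (fun i _ => zero_le_one)
          (fun i _ => by linarith [hA.eigenvalues_nonneg i])

/-- AM–GM for determinants: for PSD `A`, `det A ≤ (trace A / m) ^ m`. -/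
lemma aux_det_le_trace_pow {m : ℕ} (hm : 0 < m) {A : Matrix (Fin m) (Fin m) ℝ}
    (hA : A.PosSemidef) : A.det ≤ (A.trace / m) ^ m := by
  have hdet' : A.det = ∏ i, hA.1.eigenvalues i := by
    rw [hA.1.det_eq_prod_eigenvalues]; norm_num
  rw [hdet', aux_trace_eq_sum_eigenvalues hA.1]
  set l := hA.1.eigenvalues with hl
  have hlnn : ∀ i, 0 ≤ l i := fun i => hA.eigenvalues_nonneg i
  have key := Real.geom_mean_le_arith_mean_weighted Finset.univ (fun _ => (m : ℝ)⁻¹) l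
    (fun i _ => by positivity)
    (by simp [Finset.card_univ]; field_simp)
    (fun i _ => hlnn i)
  have h1 : (∏ i, l i ^ ((m : ℝ)⁻¹)) ^ m = ∏ i, l i := by
    rw [← Finset.prod_pow]
    congr 1; ext i
    rw [← Real.rpow_natCast (l i ^ ((m:ℝ)⁻¹)) m, ← Real.rpow_mul (hlnn i),
      inv_mul_cancel₀ (by positivity : (m:ℝ) ≠ 0), Real.rpow_one]
  have h2 : ∑ i, (m:ℝ)⁻¹ * l i = (∑ i, l i) / m := by
    rw [← Finset.mul_sum]; ring
  calc ∏ i, l i = (∏ i, l i ^ ((m : ℝ)⁻¹)) ^ m := h1.symm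
    _ ≤ ((∑ i, l i) / m) ^ m := by
        apply pow_le_pow_left₀ (Finset.prod_nonneg fun i _ => Real.rpow_nonneg (hlnn i) _)
        rw [← h2]; exact key

end Aux

/- ### Capacity bounds for a proper matrix -/

lemma capacity_bounds {M N : ℕ} (hM : 0 < M) (H : Matrix (Fin M) (Fin N) ℝ)
    (hdet : (H * Hᵀ).det = 1) {P : ℝ} (hP : 0 < P) :
    (M / 2 : ℝ) * Real.log (P / M) ≤ mimoCapacity M N H P ∧
      mimoCapacity M N H P ≤
        (M / 2 : ℝ) * Real.log (((H * Hᵀ)⁻¹.trace + P) / M) := by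
  have hMR : (0:ℝ) < M := by exact_mod_cast hM
  set G : Matrix (Fin M) (Fin M) ℝ := H * Hᵀ with hG
  have hHt : Hᴴ = Hᵀ := conjTranspose_eq_transpose_of_trivial H
  have hGpsd : G.PosSemidef := by
    have := Matrix.posSemidef_self_mul_conjTranspose H
    rwa [hHt] at this
  have hGpd : G.PosDef := aux_posDef_of_det_ne_zero hGpsd (by rw [hdet]; norm_num)
  have hGdet : G.det = 1 := hdet
  have hGinv_psd : (G⁻¹).PosSemidef := hGpd.inv.posSemidef
  set t : ℝ := (G⁻¹).trace with htdef
  have ht0 : 0 ≤ t := aux_trace_nonneg hGinv_psd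
  -- square root of G
  obtain ⟨W, hWpsd, hWW⟩ : ∃ W : Matrix (Fin M) (Fin M) ℝ, W.PosSemidef ∧ W * W = G := by
    open scoped MatrixOrder in
    exact ⟨CFC.sqrt G, (CFC.sqrt_nonneg G).posSemidef, CFC.sqrt_mul_sqrt_self G hGpsd.nonneg⟩
  have hWdet : W.det ≠ 0 := by
    intro h
    have : (W * W).det = 1 := by rw [hWW, hGdet]
    rw [det_mul, h, mul_zero] at this
    norm_num at this
  have hWinv : W * W⁻¹ = 1 := Matrix.mul_nonsing_inv _ (isUnit_iff_ne_zero.mpr hWdet)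
  have hinvW : W⁻¹ * W = 1 := Matrix.nonsing_inv_mul _ (isUnit_iff_ne_zero.mpr hWdet)
  have hGinv' : G⁻¹ = W⁻¹ * W⁻¹ := by rw [← hWW, Matrix.mul_inv_rev]
  have hWinvherm : (W⁻¹)ᴴ = W⁻¹ := hWpsd.inv.1
  have hGG : G * G⁻¹ = 1 := Matrix.mul_nonsing_inv _ (by rw [hGdet]; exact isUnit_one)
  have hGG' : G⁻¹ * G = 1 := Matrix.nonsing_inv_mul _ (by rw [hGdet]; exact isUnit_one)
  -- the projection Π
  set Pi : Matrix (Fin N) (Fin N) ℝ := Hᵀ * G⁻¹ * H with hPidef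
  have hPipsd : Pi.PosSemidef := by
    have := hGinv_psd.mul_mul_conjTranspose_same Hᵀ
    rwa [conjTranspose_eq_transpose_of_trivial, transpose_transpose] at this
  have hPitrace : Pi.trace = M := by
    rw [hPidef, Matrix.trace_mul_cycle, ← hG, hGG, Matrix.trace_one]
    simp
  have hHPi : H * (Hᵀ * G⁻¹ * H) = H := by
    rw [Matrix.mul_assoc Hᵀ G⁻¹ H, ← Matrix.mul_assoc H Hᵀ (G⁻¹ * H), ← hG,
      ← Matrix.mul_assoc G G⁻¹ H, hGG, Matrix.one_mul]
  have hPiidem : Pi * Pi = Pi := by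
    rw [hPidef, Matrix.mul_assoc (Hᵀ * G⁻¹) H (Hᵀ * G⁻¹ * H), hHPi]
  have hPiherm : Piᴴ = Pi := hPipsd.1
  have h1Pi : ((1 : Matrix (Fin N) (Fin N) ℝ) - Pi).PosSemidef := by
    have heq : (1 : Matrix (Fin N) (Fin N) ℝ) - Pi = (1 - Pi)ᴴ * (1 - Pi) := by
      rw [conjTranspose_sub, conjTranspose_one, hPiherm]
      simp only [sub_mul, mul_sub, Matrix.mul_one, Matrix.one_mul, hPiidem]
      abel
    rw [heq]
    exact Matrix.posSemidef_conjTranspose_mul_self _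
  -- trace pairing bound
  have htracePi : ∀ {Q : Matrix (Fin N) (Fin N) ℝ}, Q.PosSemidef → (Q * Pi).trace ≤ Q.trace := by
    intro Q hQ
    have h0 : 0 ≤ (Q * (1 - Pi)).trace := aux_trace_mul_nonneg hQ h1Pi
    rw [mul_sub, mul_one, trace_sub] at h0
    linarith
  -- uniform determinant bound
  have hdetbound : ∀ Q : Matrix (Fin N) (Fin N) ℝ, Q.PosSemidef → Q.trace ≤ P →
      (1 + H * Q * Hᵀ).det ≤ ((t + P) / M) ^ M := by
    intro Q hQ hQtr
    set S : Matrix (Fin M) (Fin M) ℝ := H * Q * Hᵀ with hSdef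
    have hSpsd : S.PosSemidef := by
      have := hQ.mul_mul_conjTranspose_same H
      rwa [hHt] at this
    set B : Matrix (Fin M) (Fin M) ℝ := W⁻¹ * S * W⁻¹ with hBdef
    have hBpsd : B.PosSemidef := by
      have := hSpsd.mul_mul_conjTranspose_same W⁻¹
      rwa [hWinvherm] at this
    set C : Matrix (Fin M) (Fin M) ℝ := G⁻¹ + B with hCdef
    have hCpsd : C.PosSemidef := hGinv_psd.add hBpsd
    have hkey : (1 : Matrix (Fin M) (Fin M) ℝ) + S = W * C * W := by
      rw [hCdef, hGinv', hBdef]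
      calc (1 : Matrix (Fin M) (Fin M) ℝ) + S
          = (W * W⁻¹) * (W⁻¹ * W) + (W * W⁻¹) * S * (W⁻¹ * W) := by
            rw [hWinv, hinvW]; noncomm_ring
        _ = W * (W⁻¹ * W⁻¹ + W⁻¹ * S * W⁻¹) * W := by noncomm_ring
    have hdeteq : (1 + S).det = C.det := by
      rw [hkey, det_mul, det_mul, mul_comm, ← mul_assoc, ← det_mul, hWW, hGdet, one_mul]
    have hBtrace : B.trace = (Q * Pi).trace := by
      rw [hBdef, Matrix.trace_mul_cycle, ← hGinv', hSdef, ← Matrix.mul_assoc,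
        Matrix.trace_mul_comm, ← Matrix.mul_assoc, ← Matrix.mul_assoc, ← hPidef,
        Matrix.trace_mul_comm]
    have hCtrace : C.trace ≤ t + P := by
      rw [hCdef, Matrix.trace_add, hBtrace]
      have := htracePi hQ
      have := hQtr
      linarith [htracePi hQ]
    have hCtr0 : 0 ≤ C.trace := aux_trace_nonneg hCpsd
    calc (1 + S).det = C.det := hdeteq
      _ ≤ (C.trace / M) ^ M := aux_det_le_trace_pow hM hCpsd
      _ ≤ ((t + P) / M) ^ M := by
          apply pow_le_pow_left₀ (by positivity)
          gcongr
  -- the set of achievable rates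
  set Sset : Set ℝ := {r : ℝ | ∃ Q : Matrix (Fin N) (Fin N) ℝ, Q.PosSemidef ∧ Q.trace ≤ P ∧
    r = (1 / 2 : ℝ) * Real.log ((1 + H * Q * Hᵀ).det)} with hSset
  have hub : ∀ r ∈ Sset, r ≤ (M / 2 : ℝ) * Real.log ((t + P) / M) := by
    rintro r ⟨Q, hQ, hQtr, rfl⟩
    have h1 : (1:ℝ) ≤ (1 + H * Q * Hᵀ).det := by
      apply aux_one_le_det_one_add
      have := hQ.mul_mul_conjTranspose_same H
      rwa [hHt] at this
    have h2 := hdetbound Q hQ hQtr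
    have h3 : Real.log ((1 + H * Q * Hᵀ).det) ≤ Real.log (((t + P) / M) ^ M) :=
      Real.log_le_log (by linarith) h2
    rw [Real.log_pow] at h3
    calc (1 / 2 : ℝ) * Real.log ((1 + H * Q * Hᵀ).det)
        ≤ (1 / 2 : ℝ) * ((M : ℕ) * Real.log ((t + P) / M)) := by linarith
      _ = (M / 2 : ℝ) * Real.log ((t + P) / M) := by ring
  have hbdd : BddAbove Sset := ⟨(M / 2 : ℝ) * Real.log ((t + P) / M), hub⟩
  have hne : Sset.Nonempty :=
    ⟨(1 / 2 : ℝ) * Real.log ((1 + H * (0 : Matrix (Fin N) (Fin N) ℝ) * Hᵀ).det),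
      (0 : Matrix (Fin N) (Fin N) ℝ), Matrix.PosSemidef.zero, by simp [hP.le], rfl⟩
  constructor
  · -- lower bound via Q₀ = (P/M) • Π
    have hPM : 0 ≤ P / M := by positivity
    set Q₀ : Matrix (Fin N) (Fin N) ℝ := (P / M) • Pi with hQ₀def
    have hQ₀psd : Q₀.PosSemidef := aux_smul_posSemidef hPipsd hPM
    have hQ₀tr : Q₀.trace ≤ P := by
      rw [hQ₀def, trace_smul, hPitrace]
      simp only [smul_eq_mul]
      rw [div_mul_cancel₀ _ (ne_of_gt hMR)]
    have hHQ₀ : H * Q₀ * Hᵀ = (P / M) • G := by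
      rw [hQ₀def, Matrix.mul_smul, Matrix.smul_mul]
      congr 1
      rw [hPidef, hHPi, ← hG]
    have hmemb : (1 / 2 : ℝ) * Real.log ((1 + H * Q₀ * Hᵀ).det) ∈ Sset :=
      ⟨Q₀, hQ₀psd, hQ₀tr, rfl⟩
    have hsmulG : ((P / M) • G).PosSemidef := aux_smul_posSemidef hGpsd hPM
    have hdet1 : ((P / M) • G).det = (P / M) ^ M := by
      rw [det_smul, hGdet, mul_one]
      simp
    have hdetlb : (P / M) ^ M ≤ (1 + H * Q₀ * Hᵀ).det := by
      rw [hHQ₀, ← hdet1]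
      exact aux_det_le_det_one_add hsmulG
    have hlog : (M / 2 : ℝ) * Real.log (P / M) ≤
        (1 / 2 : ℝ) * Real.log ((1 + H * Q₀ * Hᵀ).det) := by
      have hpos : (0:ℝ) < (P / M) ^ M := by positivity
      have hlog2 := Real.log_le_log hpos hdetlb
      rw [Real.log_pow] at hlog2
      have hrw : (M / 2 : ℝ) * Real.log (P / M) =
          (1/2 : ℝ) * ((M : ℝ) * Real.log (P / M)) := by ring
      rw [hrw]
      linarith [hlog2]
    exact hlog.trans (le_csSup hbdd hmemb)
  · exact csSup_le hne hub

/-- **High-SNR sum-capacity expression; Corollaries 2 and 4.**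
For proper matrices `H₁, …, H_K` (each of size `M × N_k`), the minimum of the
individual capacities `C(H_k, P_k)` is within `ε` of
`(M/2) · log ((min_k P_k) / M)` whenever `min_k P_k` is large enough. -/
theorem min_capacity_high_snr
    (K : ℕ) (hK : 1 ≤ K) (M : ℕ) (Nt : Fin K → ℕ)
    (H : ∀ k : Fin K, Matrix (Fin M) (Fin (Nt k)) ℝ)
    (hle : ∀ k, M ≤ Nt k) (hrank : ∀ k, (H k).rank = M)
    (hdet : ∀ k, (H k * (H k)ᵀ).det = 1) :
    ∀ ε > (0 : ℝ), ∃ P₀ > (0 : ℝ), ∀ P : Fin K → ℝ,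
      P₀ ≤ (⨅ k, P k) →
      |(⨅ k, mimoCapacity M (Nt k) (H k) (P k))
          - (M / 2 : ℝ) * Real.log ((⨅ k, P k) / M)| ≤ ε := by
  intro ε hε
  haveI : Nonempty (Fin K) := ⟨⟨0, hK⟩⟩
  rcases Nat.eq_zero_or_pos M with rfl | hM
  · -- degenerate case M = 0
    refine ⟨1, one_pos, fun P hP => ?_⟩
    have hbddP : BddBelow (Set.range P) := (Set.finite_range P).bddBelow
    have hPk : ∀ k, (0:ℝ) < P k := fun k =>
      lt_of_lt_of_le one_pos (le_trans hP (ciInf_le hbddP k))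
    have hcap : ∀ k, mimoCapacity 0 (Nt k) (H k) (P k) = 0 := by
      intro k
      unfold mimoCapacity
      have hset : {r : ℝ | ∃ Q : Matrix (Fin (Nt k)) (Fin (Nt k)) ℝ, Q.PosSemidef ∧
          Q.trace ≤ P k ∧ r = (1 / 2 : ℝ) * Real.log ((1 + H k * Q * (H k)ᵀ).det)} =
          {(0:ℝ)} := by
        ext r
        simp only [Set.mem_setOf_eq, Set.mem_singleton_iff, Matrix.det_isEmpty,
          Real.log_one, mul_zero]
        constructor
        · rintro ⟨Q, _, _, h⟩; exact h
        · intro h; exact ⟨0, Matrix.PosSemidef.zero, by simp [(hPk k).le], h⟩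
      rw [hset, csSup_singleton]
    have : (⨅ k, mimoCapacity 0 (Nt k) (H k) (P k)) = 0 := by
      simp only [hcap]; exact ciInf_const
    rw [this]
    simp only [Nat.cast_zero, zero_div, zero_mul, sub_zero, abs_zero]
    exact hε.le
  · -- main case M ≥ 1
    have hMR : (0:ℝ) < M := by exact_mod_cast hM
    set t : Fin K → ℝ := fun k => ((H k * (H k)ᵀ)⁻¹).trace with htdef
    have ht0 : ∀ k, 0 ≤ t k := by
      intro k
      have hGpsd : (H k * (H k)ᵀ).PosSemidef := by
        have := Matrix.posSemidef_self_mul_conjTranspose (H k)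
        rwa [conjTranspose_eq_transpose_of_trivial] at this
      exact aux_trace_nonneg (aux_posDef_of_det_ne_zero hGpsd
        (by rw [hdet k]; norm_num)).inv.posSemidef
    set T : ℝ := Finset.univ.sup' Finset.univ_nonempty t with hTdef
    have hT0 : 0 ≤ T := le_trans (ht0 (Classical.arbitrary _))
      (Finset.le_sup' t (Finset.mem_univ _))
    have htT : ∀ k, t k ≤ T := fun k => Finset.le_sup' t (Finset.mem_univ k)
    set P₀ : ℝ := max 1 ((M * (T + 1)) / ε) with hP₀def
    have hP₀1 : (1:ℝ) ≤ P₀ := le_max_left _ _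
    have hP₀pos : (0:ℝ) < P₀ := lt_of_lt_of_le one_pos hP₀1
    refine ⟨P₀, hP₀pos, fun P hP => ?_⟩
    have hbddP : BddBelow (Set.range P) := (Set.finite_range P).bddBelow
    have hinfP : ∀ k, (⨅ j, P j) ≤ P k := fun k => ciInf_le hbddP k
    have hminpos : (0:ℝ) < ⨅ j, P j := lt_of_lt_of_le hP₀pos hP
    have hPkpos : ∀ k, (0:ℝ) < P k := fun k => lt_of_lt_of_le hminpos (hinfP k)
    have hcb := fun k => capacity_bounds hM (H k) (hdet k) (hPkpos k)
    have hbddC : BddBelow (Set.range fun k => mimoCapacity M (Nt k) (H k) (P k)) :=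
      (Set.finite_range _).bddBelow
    rw [abs_le]
    constructor
    · -- lower bound: the min capacity exceeds the target
      rw [neg_le, neg_sub]
      have hlow : (M / 2 : ℝ) * Real.log ((⨅ j, P j) / M) ≤
          ⨅ k, mimoCapacity M (Nt k) (H k) (P k) := by
        apply le_ciInf
        intro k
        refine le_trans ?_ (hcb k).1
        apply mul_le_mul_of_nonneg_left _ (by positivity)
        apply Real.log_le_log (div_pos hminpos hMR)
        gcongr
        exact hinfP k
      linarith [hlow]
    · -- upper bound via the argmin of P
      obtain ⟨j, hj⟩ := exists_eq_ciInf_of_finite (f := P)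
      have hub : (⨅ k, mimoCapacity M (Nt k) (H k) (P k)) ≤
          (M / 2 : ℝ) * Real.log ((t j + P j) / M) :=
        le_trans (ciInf_le hbddC j) (hcb j).2
      have hlogdiff : Real.log ((t j + P j) / M) - Real.log ((⨅ k, P k) / M) ≤
          t j / (⨅ k, P k) := by
        rw [← hj]
        have hPj : (0:ℝ) < P j := hPkpos j
        have hnum : (0:ℝ) < t j + P j := by linarith [ht0 j]
        rw [Real.log_div (ne_of_gt hnum) (ne_of_gt hMR),
          Real.log_div (ne_of_gt hPj) (ne_of_gt hMR)]
        have : Real.log (t j + P j) - Real.log (P j) = Real.log ((t j + P j) / P j) := by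
          rw [Real.log_div (ne_of_gt hnum) (ne_of_gt hPj)]
        have h2 : Real.log ((t j + P j) / P j) ≤ (t j + P j) / P j - 1 :=
          Real.log_le_sub_one_of_pos (by positivity)
        have h3 : (t j + P j) / P j - 1 = t j / P j := by field_simp; ring
        linarith
      have hfinal : (M / 2 : ℝ) * (t j / (⨅ k, P k)) ≤ ε := by
        have h1 : t j / (⨅ k, P k) ≤ (T + 1) / P₀ := by
          apply div_le_div₀ (by linarith [hT0]) (by linarith [htT j]) hP₀pos hP
        have h2 : (M / 2 : ℝ) * ((T + 1) / P₀) ≤ ε := by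
          have hP₀ge : ((M : ℝ) * (T + 1)) / ε ≤ P₀ := le_max_right _ _
          have h3 : (M : ℝ) * (T + 1) ≤ ε * P₀ := by
            have h4 := mul_le_mul_of_nonneg_left hP₀ge hε.le
            rw [mul_comm ε ((M : ℝ) * (T + 1) / ε),
              div_mul_cancel₀ _ (ne_of_gt hε)] at h4
            linarith
          rw [mul_div_assoc', div_le_iff₀ hP₀pos]
          nlinarith [hT0, hMR]
        calc (M / 2 : ℝ) * (t j / (⨅ k, P k)) ≤ (M / 2 : ℝ) * ((T + 1) / P₀) := by
              apply mul_le_mul_of_nonneg_left h1 (by positivity)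
          _ ≤ ε := h2
      have hmono : (M / 2 : ℝ) * Real.log ((t j + P j) / M) -
          (M / 2 : ℝ) * Real.log ((⨅ k, P k) / M) ≤ (M / 2 : ℝ) * (t j / (⨅ k, P k)) := by
        rw [← mul_sub]
        apply mul_le_mul_of_nonneg_left hlogdiff (by positivity)
      linarith [hub, hmono, hfinal]
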